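/- Suppose for each element the discrete divergence theorem holds: 𝟙ᵀ S_x v_x + 𝟙ᵀ S_y v_y = Σ_{g ∈ G^e} 𝟙ᵀ (L^g)ᵀ S_J^g W^g v_n⁻ for all v_x, v_y ∈ V_h, and the numerical flux v_n* takes equal and opposite values on the two sides of each interior mortar. Then the semidiscrete scheme M_J dp/dt + S_x v_x + S_y v_y = -Σ_g (L^g)ᵀ S_J^g W^g (v_n* - v_n⁻) conserves total pressure mass: Σ_e 𝟙ᵀ M_J dp/dt = 0 with periodic boundary conditions. -/

import Mathlib

open Matrix

/-- Conservation of pressure mass: if every element satisfies the discrete divergence theorem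
`𝟙ᵀ S_x v_x + 𝟙ᵀ S_y v_y = Σ_{g∈G^e} 𝟙ᵀ (L^g)ᵀ S_J^g W^g v_n⁻`, the mortar interpolation
maps constants to constants, and the numerical flux `v_n*` takes equal and opposite values on
the two sides of every (interior) mortar, then the semidiscrete pressure update satisfies
`Σ_e 𝟙ᵀ M_J dp/dt = 0` (periodic boundary conditions: every mortar is interior). -/
theorem pressure_mass_conservation
    {E G : Type*} [Fintype E] [DecidableEq G]
    (d : E → ℕ) (q : G → ℕ)
    (Ge : E → Finset G)
    (em ep : G → E)
    (MJ Sx Sy : ∀ e : E, Matrix (Fin (d e)) (Fin (d e)) ℝ)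
    (dpdt vx vy : ∀ e : E, Fin (d e) → ℝ)
    (SJW : ∀ g : G, Matrix (Fin (q g)) (Fin (q g)) ℝ)
    (Lg : ∀ (e : E) (g : G), Matrix (Fin (q g)) (Fin (d e)) ℝ)
    (vminus vstar : ∀ (e : E) (g : G), Fin (q g) → ℝ)
    (hmem : ∀ g, g ∈ Ge (em g) ∧ g ∈ Ge (ep g) ∧ em g ≠ ep g)
    (hsides : ∀ e g, g ∈ Ge e → e = em g ∨ e = ep g)
    (hL1 : ∀ e g, Lg e g *ᵥ (fun _ => (1 : ℝ)) = fun _ => 1)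
    (hopp : ∀ g, SJW g *ᵥ vstar (em g) g = -(SJW g *ᵥ vstar (ep g) g))
    (hdiv : ∀ e, (fun _ => (1 : ℝ)) ⬝ᵥ (Sx e *ᵥ vx e) +
        (fun _ => (1 : ℝ)) ⬝ᵥ (Sy e *ᵥ vy e)
      = ∑ g ∈ Ge e, (fun _ => (1 : ℝ)) ⬝ᵥ ((Lg e g)ᵀ *ᵥ (SJW g *ᵥ vminus e g)))
    (hscheme : ∀ e, MJ e *ᵥ dpdt e + Sx e *ᵥ vx e + Sy e *ᵥ vy e
      = -∑ g ∈ Ge e, (Lg e g)ᵀ *ᵥ (SJW g *ᵥ (vstar e g - vminus e g))) :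
    ∑ e, (fun _ => (1 : ℝ)) ⬝ᵥ (MJ e *ᵥ dpdt e) = 0 := by
  classical
  -- key identity: 1 ⬝ᵥ (Lᵀ *ᵥ x) = 1 ⬝ᵥ x
  have hdot : ∀ (e : E) (g : G) (x : Fin (q g) → ℝ),
      (fun _ => (1 : ℝ)) ⬝ᵥ ((Lg e g)ᵀ *ᵥ x) = (fun _ => (1 : ℝ)) ⬝ᵥ x := by
    intro e g x
    rw [dotProduct_mulVec, vecMul_transpose, hL1]
  -- per-element identity
  have key : ∀ e : E, (fun _ => (1 : ℝ)) ⬝ᵥ (MJ e *ᵥ dpdt e)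
      = -∑ g ∈ Ge e, (fun _ => (1 : ℝ)) ⬝ᵥ (SJW g *ᵥ vstar e g) := by
    intro e
    have hds : ∀ {n : ℕ} (s : Finset G) (w : G → Fin n → ℝ),
        (fun _ => (1 : ℝ)) ⬝ᵥ (∑ g ∈ s, w g) = ∑ g ∈ s, (fun _ => (1 : ℝ)) ⬝ᵥ w g := by
      intro n s w
      simp only [dotProduct, Finset.sum_apply, Finset.mul_sum]
      exact Finset.sum_comm
    have h1 := congrArg (fun v => (fun _ => (1 : ℝ)) ⬝ᵥ v) (hscheme e)
    simp only [dotProduct_add, dotProduct_neg, hds] at h1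
    have h2 : ∀ g ∈ Ge e,
        (fun _ => (1 : ℝ)) ⬝ᵥ ((Lg e g)ᵀ *ᵥ (SJW g *ᵥ (vstar e g - vminus e g)))
        = (fun _ => (1 : ℝ)) ⬝ᵥ (SJW g *ᵥ vstar e g)
          - (fun _ => (1 : ℝ)) ⬝ᵥ ((Lg e g)ᵀ *ᵥ (SJW g *ᵥ vminus e g)) := by
      intro g _
      rw [hdot, mulVec_sub, dotProduct_sub, hdot]
    rw [Finset.sum_congr rfl h2, Finset.sum_sub_distrib] at h1
    have h3 := hdiv e
    linarith
  rw [Finset.sum_congr rfl (fun e _ => key e)]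
  simp only [Finset.sum_neg_distrib, neg_eq_zero]
  -- swap the order of summation
  set B : Finset G := Finset.univ.biUnion Ge with hB
  have hswap : ∑ e : E, ∑ g ∈ Ge e, (fun _ => (1 : ℝ)) ⬝ᵥ (SJW g *ᵥ vstar e g)
      = ∑ g ∈ B, ∑ e ∈ ({em g, ep g} : Finset E),
          (fun _ => (1 : ℝ)) ⬝ᵥ (SJW g *ᵥ vstar e g) := by
    apply Finset.sum_comm'
    intro e g
    constructor
    · rintro ⟨-, hg⟩
      refine ⟨?_, Finset.mem_biUnion.mpr ⟨e, Finset.mem_univ e, hg⟩⟩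
      rcases hsides e g hg with h | h <;> simp [h]
    · rintro ⟨he, -⟩
      refine ⟨Finset.mem_univ e, ?_⟩
      rcases Finset.mem_insert.mp he with h | h
      · rw [h]; exact (hmem g).1
      · rw [Finset.mem_singleton.mp h]; exact (hmem g).2.1
  rw [hswap]
  apply Finset.sum_eq_zero
  intro g _
  rw [Finset.sum_pair (hmem g).2.2, hopp g, dotProduct_neg]
  ring
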